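/- arXiv:1711.02779 — 3 statements merged into one kernel-verified Lean document; each statement's English description precedes it below -/
import Mathlib

section
/- Let Ω ⊂ ℝ^d be a bounded convex open set, μ ∈ ℝ, and let v be twice continuously differentiable in Ω with Δv + μ = 0 in Ω. Suppose v is semi-concave, say D²v|_x ≤ C·Id as quadratic forms for all x ∈ Ω. Then the Hessian is also uniformly bounded below: D²v|_x(e,e) ≥ −μ − C(d−1) for every unit vector e and every x ∈ Ω. Consequently ∇v is Lipschitz on Ω, and v and ∇v extend continuously to closure(Ω) with the extended gradient Lipschitz (v extends to a C^{1,1} function on closure(Ω)). -/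
open scoped RealInnerProductSpace NNReal Real
open Metric Set MeasureTheory Bornology Filter
open scoped Topology

noncomputable section

/-- The Hessian of `f` at `x`, evaluated at the pair of vectors `(u, w)`. -/
noncomputable def hess {V : Type*} [NormedAddCommGroup V] [NormedSpace ℝ V]
    (f : V → ℝ) (x u w : V) : ℝ :=
  fderiv ℝ (fun y => fderiv ℝ f y u) x w

/-- The Laplacian of `f` at `x` (the trace of its Hessian). -/
noncomputable def lap {V : Type*} [NormedAddCommGroup V] [InnerProductSpace ℝ V]
    [FiniteDimensional ℝ V] (f : V → ℝ) (x : V) : ℝ :=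
  ∑ i, hess f x (stdOrthonormalBasis ℝ V i) (stdOrthonormalBasis ℝ V i)

lemma sum_diag_eq {E : Type*} [NormedAddCommGroup E] [InnerProductSpace ℝ E]
    {ι κ : Type*} [Fintype ι] [Fintype κ] (b : OrthonormalBasis ι ℝ E) (c : OrthonormalBasis κ ℝ E)
    (B : E →L[ℝ] E →L[ℝ] ℝ) : ∑ i, B (b i) (b i) = ∑ j, B (c j) (c j) := by
  have expand : ∀ x : E, B x x = ∑ j, ∑ k, ⟪c j, x⟫ * ⟪c k, x⟫ * B (c j) (c k) := by
    intro x
    conv_lhs => rw [← c.sum_repr' x]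
    simp only [map_sum, _root_.map_smul, ContinuousLinearMap.coe_sum', ContinuousLinearMap.coe_smul',
      ContinuousLinearMap.smul_apply, Finset.sum_apply, Pi.smul_apply, smul_eq_mul, Finset.mul_sum]
    rw [Finset.sum_comm]
    exact Finset.sum_congr rfl fun j _ => Finset.sum_congr rfl fun k _ => by ring
  calc ∑ i, B (b i) (b i) = ∑ i, ∑ j, ∑ k, ⟪c j, b i⟫ * ⟪c k, b i⟫ * B (c j) (c k) := by
        simp_rw [expand]
    _ = ∑ j, ∑ k, (∑ i, ⟪c j, b i⟫ * ⟪b i, c k⟫) * B (c j) (c k) := by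
        rw [Finset.sum_comm]
        refine Finset.sum_congr rfl fun j _ => ?_
        rw [Finset.sum_comm]
        refine Finset.sum_congr rfl fun k _ => ?_
        rw [Finset.sum_mul]
        exact Finset.sum_congr rfl fun i _ => by rw [real_inner_comm (b i) (c k)]
    _ = ∑ j, ∑ k, ⟪c j, c k⟫ * B (c j) (c k) := by
        simp_rw [b.sum_inner_mul_inner]
    _ = ∑ j, B (c j) (c j) := by
        refine Finset.sum_congr rfl fun j _ => ?_
        rw [Finset.sum_eq_single j]
        · rw [real_inner_self_eq_norm_sq, c.orthonormal.1 j]; simp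
        · intro k _ hk
          rw [c.orthonormal.2 (Ne.symm hk)]; simp
        · simp
  
lemma opNorm_le_of_diag {E : Type*} [NormedAddCommGroup E] [InnerProductSpace ℝ E]
    (B : E →L[ℝ] E →L[ℝ] ℝ) (hsymm : ∀ u w, B u w = B w u) {M : ℝ} (hM : 0 ≤ M)
    (hdiag : ∀ e : E, |B e e| ≤ M * ‖e‖ ^ 2) : ‖B‖ ≤ M := by
  have key : ∀ u w : E, B u w = (B (u+w) (u+w) - B (u-w) (u-w)) / 4 := by
    intro u w
    have h1 : B (u+w) (u+w) = B u u + B u w + B w u + B w w := by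
      simp only [map_add, ContinuousLinearMap.add_apply]; ring
    have h2 : B (u-w) (u-w) = B u u - B u w - B w u + B w w := by
      simp only [map_sub, ContinuousLinearMap.sub_apply]; ring
    rw [h1, h2, hsymm w u]; ring
  have h1 : ∀ u w : E, |B u w| ≤ M / 2 * (‖u‖^2 + ‖w‖^2) := by
    intro u w
    have p : ‖u+w‖^2 + ‖u-w‖^2 = 2*(‖u‖^2+‖w‖^2) := by
      exact parallelogram_law_with_norm ℝ u w
    have a1 := abs_le.mp (hdiag (u+w))
    have a2 := abs_le.mp (hdiag (u-w))
    have pM : M*‖u+w‖^2 + M*‖u-w‖^2 = 2*M*(‖u‖^2+‖w‖^2) := by linear_combination M * p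
    rw [key u w, abs_le]
    constructor
    · linarith [a1.1, a2.2]
    · linarith [a1.2, a2.1]
  have h2 : ∀ u w : E, |B u w| ≤ M * ‖u‖ * ‖w‖ := by
    intro u w
    by_cases hu : u = 0
    · simp [hu]
    by_cases hw : w = 0
    · simp [hw]
    have hun : 0 < ‖u‖ := norm_pos_iff.mpr hu
    have hwn : 0 < ‖w‖ := norm_pos_iff.mpr hw
    set t := Real.sqrt (‖w‖ / ‖u‖) with ht_def
    have ht : t^2 = ‖w‖ / ‖u‖ := Real.sq_sqrt (by positivity)
    have htpos : 0 < t := Real.sqrt_pos.mpr (by positivity)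
    have hBe : B (t • u) (t⁻¹ • w) = B u w := by
      simp only [_root_.map_smul, ContinuousLinearMap.smul_apply, smul_eq_mul]
      field_simp
    have hnu : ‖t • u‖^2 = ‖u‖ * ‖w‖ := by
      rw [norm_smul, mul_pow, Real.norm_eq_abs, sq_abs, ht]
      field_simp
    have hnw : ‖t⁻¹ • w‖^2 = ‖u‖ * ‖w‖ := by
      rw [norm_smul, mul_pow, Real.norm_eq_abs, sq_abs, inv_pow, ht]
      field_simp
    have := h1 (t • u) (t⁻¹ • w)
    rw [hBe, hnu, hnw] at this
    calc |B u w| ≤ M / 2 * (‖u‖ * ‖w‖ + ‖u‖ * ‖w‖) := this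
      _ = M * ‖u‖ * ‖w‖ := by ring
  refine B.opNorm_le_bound hM fun w => ?_
  refine ContinuousLinearMap.opNorm_le_bound _ (by positivity) fun u => ?_
  calc ‖B w u‖ = |B w u| := Real.norm_eq_abs _
    _ ≤ M * ‖w‖ * ‖u‖ := h2 w u

theorem semiconcave_hessian_bounded_below {d : ℕ}
    (Ω : Set (EuclideanSpace ℝ (Fin d)))
    (hopen : IsOpen Ω) (hconv : Convex ℝ Ω) (hbd : IsBounded Ω)
    (μ C : ℝ) (v : EuclideanSpace ℝ (Fin d) → ℝ)
    (hv : ContDiffOn ℝ 2 v Ω)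
    (hlap : ∀ x ∈ Ω, lap v x + μ = 0)
    (hsc : ∀ x ∈ Ω, ∀ e : EuclideanSpace ℝ (Fin d), hess v x e e ≤ C * ‖e‖ ^ 2) :
    (∀ x ∈ Ω, ∀ e : EuclideanSpace ℝ (Fin d), ‖e‖ = 1 →
        -μ - C * ((d : ℝ) - 1) ≤ hess v x e e) ∧
    (∃ K : ℝ≥0, LipschitzOnWith K (fun x => fderiv ℝ v x) Ω) ∧
    ∃ (vt : EuclideanSpace ℝ (Fin d) → ℝ)
      (g : EuclideanSpace ℝ (Fin d) → (EuclideanSpace ℝ (Fin d) →L[ℝ] ℝ)) (K : ℝ≥0),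
      Set.EqOn vt v Ω ∧ Set.EqOn g (fun x => fderiv ℝ v x) Ω ∧
      ContinuousOn vt (closure Ω) ∧ LipschitzOnWith K g (closure Ω) ∧
      ∀ x ∈ closure Ω, HasFDerivWithinAt vt (g x) (closure Ω) x := by
  have hdvΩ : DifferentiableOn ℝ v Ω := hv.differentiableOn (by norm_num)
  have hf'CD : ContDiffOn ℝ 1 (fun y => fderiv ℝ v y) Ω :=
    hv.fderiv_of_isOpen hopen (by norm_num)
  have hf'diff : DifferentiableOn ℝ (fun y => fderiv ℝ v y) Ω :=
    hf'CD.differentiableOn (by norm_num)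
  have hB : ∀ x ∈ Ω, HasFDerivAt (fun y => fderiv ℝ v y)
      (fderiv ℝ (fun y => fderiv ℝ v y) x) x := fun x hx =>
    (hf'diff.differentiableAt (hopen.mem_nhds hx)).hasFDerivAt
  have hess_eq : ∀ x ∈ Ω, ∀ u w : EuclideanSpace ℝ (Fin d),
      hess v x u w = fderiv ℝ (fun y => fderiv ℝ v y) x w u := by
    intro x hx u w
    have h := (hB x hx).clm_apply (hasFDerivAt_const u x)
    rw [hess, h.fderiv]
    simp
  have hsymm : ∀ x ∈ Ω, ∀ u w : EuclideanSpace ℝ (Fin d),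
      fderiv ℝ (fun y => fderiv ℝ v y) x u w = fderiv ℝ (fun y => fderiv ℝ v y) x w u := by
    intro x hx u w
    have hev : ∀ᶠ y in 𝓝 x, HasFDerivAt v (fderiv ℝ v y) y := by
      filter_upwards [hopen.mem_nhds hx] with y hy
      exact (hdvΩ.differentiableAt (hopen.mem_nhds hy)).hasFDerivAt
    exact second_derivative_symmetric_of_eventually hev (hB x hx) u w
  -- Part 1
  have part1 : ∀ x ∈ Ω, ∀ e : EuclideanSpace ℝ (Fin d), ‖e‖ = 1 →
      -μ - C * ((d : ℝ) - 1) ≤ hess v x e e := by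
    intro x hx e he
    set B := fderiv ℝ (fun y => fderiv ℝ v y) x with hBdef
    have hd : 0 < d := by
      by_contra h
      push_neg at h
      interval_cases d
      have : e = 0 := Subsingleton.elim e 0
      rw [this] at he
      simp at he
    have card : Module.finrank ℝ (EuclideanSpace ℝ (Fin d)) = Fintype.card (Fin d) := by
      simp [finrank_euclideanSpace]
    set i₀ : Fin d := ⟨0, hd⟩ with hi₀
    have horth : Orthonormal ℝ (({i₀} : Set (Fin d)).restrict
        (fun _ : Fin d => e)) := by
      constructor
      · intro i; exact he
      · intro i j hij; exact absurd (Subsingleton.elim i j) hij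
    obtain ⟨b, hb⟩ := horth.exists_orthonormalBasis_extension_of_card_eq card
    have hbe : b i₀ = e := hb i₀ rfl
    have hsum : ∑ i, B (b i) (b i) = -μ := by
      have h1 : lap v x = ∑ i, B (stdOrthonormalBasis ℝ (EuclideanSpace ℝ (Fin d)) i)
          (stdOrthonormalBasis ℝ (EuclideanSpace ℝ (Fin d)) i) := by
        unfold lap
        exact Finset.sum_congr rfl fun i _ => hess_eq x hx _ _
      rw [sum_diag_eq b (stdOrthonormalBasis ℝ (EuclideanSpace ℝ (Fin d))) B, ← h1]
      linarith [hlap x hx]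
    have hkey : B (b i₀) (b i₀) + ∑ i ∈ Finset.univ.erase i₀, B (b i) (b i) = -μ := by
      rw [← hsum]
      exact Finset.add_sum_erase Finset.univ (fun i => B (b i) (b i)) (Finset.mem_univ i₀)
    have hbound : ∑ i ∈ Finset.univ.erase i₀, B (b i) (b i) ≤ C * ((d:ℝ) - 1) := by
      have hle : ∀ i ∈ Finset.univ.erase i₀, B (b i) (b i) ≤ C := by
        intro i _
        have h := hsc x hx (b i)
        rw [hess_eq x hx] at h
        rw [b.orthonormal.1 i] at h
        simpa using h
      calc ∑ i ∈ Finset.univ.erase i₀, B (b i) (b i)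
          ≤ ∑ _i ∈ Finset.univ.erase i₀, C := Finset.sum_le_sum hle
        _ = ((d - 1 : ℕ) : ℝ) * C := by
            rw [Finset.sum_const, Finset.card_erase_of_mem (Finset.mem_univ i₀)]
            simp [nsmul_eq_mul]
        _ = C * ((d:ℝ) - 1) := by
            rw [Nat.cast_sub hd]
            push_cast
            ring
    have hee : hess v x e e = B e e := hess_eq x hx e e
    rw [hee, ← hbe]
    linarith [hbound, hkey]
  -- common bound
  set M : ℝ := |C| ⊔ |μ + C * ((d:ℝ) - 1)| with hMdef
  have hM : 0 ≤ M := le_trans (abs_nonneg C) le_sup_left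
  have hBnorm : ∀ x ∈ Ω, ‖fderiv ℝ (fun y => fderiv ℝ v y) x‖ ≤ M := by
    intro x hx
    apply opNorm_le_of_diag _ (hsymm x hx) hM
    intro e
    by_cases he : e = 0
    · simp [he]
    have hen : 0 < ‖e‖ := norm_pos_iff.mpr he
    set e' : EuclideanSpace ℝ (Fin d) := ‖e‖⁻¹ • e with he'
    have hne' : ‖e'‖ = 1 := by
      rw [he', norm_smul, Real.norm_eq_abs, abs_inv, abs_of_pos hen]
      field_simp
    have hscale : fderiv ℝ (fun y => fderiv ℝ v y) x e e =
        ‖e‖^2 * fderiv ℝ (fun y => fderiv ℝ v y) x e' e' := by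
      rw [he']
      simp only [_root_.map_smul, ContinuousLinearMap.smul_apply, smul_eq_mul]
      field_simp
    have hup : fderiv ℝ (fun y => fderiv ℝ v y) x e' e' ≤ C := by
      have h := hsc x hx e'
      rw [hess_eq x hx, hne'] at h
      simpa using h
    have hlo : -(μ + C * ((d:ℝ) - 1)) ≤ fderiv ℝ (fun y => fderiv ℝ v y) x e' e' := by
      have h := part1 x hx e' hne'
      rw [hess_eq x hx] at h
      linarith
    have habs : |fderiv ℝ (fun y => fderiv ℝ v y) x e' e'| ≤ M := by
      rw [abs_le]
      constructor
      · have : |μ + C * ((d:ℝ) - 1)| ≤ M := le_sup_right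
        have := le_abs_self (μ + C * ((d:ℝ) - 1))
        linarith
      · have : |C| ≤ M := le_sup_left
        have := le_abs_self C
        linarith
    rw [hscale, abs_mul, abs_of_nonneg (sq_nonneg ‖e‖)]
    calc ‖e‖^2 * |fderiv ℝ (fun y => fderiv ℝ v y) x e' e'| ≤ ‖e‖^2 * M := by
          exact mul_le_mul_of_nonneg_left habs (sq_nonneg _)
      _ = M * ‖e‖^2 := by ring
  set K : ℝ≥0 := ⟨M, hM⟩ with hKdef
  have part2 : LipschitzOnWith K (fun x => fderiv ℝ v x) Ω := by
    apply Convex.lipschitzOnWith_of_nnnorm_fderiv_le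
      (fun x hx => hf'diff.differentiableAt (hopen.mem_nhds hx)) _ hconv
    intro x hx
    have := hBnorm x hx
    rw [← NNReal.coe_le_coe]
    rw [coe_nnnorm]; exact this
  refine ⟨part1, ⟨K, part2⟩, ?_⟩
  -- Part 3
  rcases Ω.eq_empty_or_nonempty with hΩ | ⟨x₀, hx₀⟩
  · refine ⟨v, fun x => fderiv ℝ v x, 0, fun x hx => rfl, fun x hx => rfl, ?_, ?_, ?_⟩
    · rw [hΩ, closure_empty]; exact continuousOn_empty _
    · rw [hΩ, closure_empty]; exact lipschitzOnWith_empty _ _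
    · rw [hΩ, closure_empty]; intro x hx; exact absurd hx (notMem_empty x)
  obtain ⟨R, hR⟩ := hbd.subset_closedBall x₀
  let bW := Module.finBasis ℝ (EuclideanSpace ℝ (Fin d) →L[ℝ] ℝ)
  let φ := bW.equivFunL
  obtain ⟨Kφ, hφlip⟩ : ∃ Kφ, LipschitzWith Kφ ⇑φ := ⟨_, φ.lipschitz⟩
  obtain ⟨Kψ, hψlip⟩ : ∃ Kψ, LipschitzWith Kψ ⇑φ.symm := ⟨_, φ.symm.lipschitz⟩
  have h1 : LipschitzOnWith (Kφ * K) (⇑φ ∘ fun x => fderiv ℝ v x) Ω :=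
    hφlip.comp_lipschitzOnWith part2
  obtain ⟨G, hGlip, hGeq⟩ := h1.extend_pi
  obtain ⟨Kg, g', hg'lip, hEqg⟩ : ∃ (Kg : ℝ≥0)
      (g' : EuclideanSpace ℝ (Fin d) → (EuclideanSpace ℝ (Fin d) →L[ℝ] ℝ)),
      LipschitzWith Kg g' ∧ Set.EqOn g' (fun x => fderiv ℝ v x) Ω := by
    refine ⟨Kψ * (Kφ * K), ⇑φ.symm ∘ G, hψlip.comp hGlip, ?_⟩
    intro x hx
    have h := hGeq hx
    simp only [Function.comp_apply]
    rw [← h]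
    simp
  -- v is Lipschitz on Ω
  have hfdbound : ∀ x ∈ Ω, ‖fderiv ℝ v x‖ ≤ ‖fderiv ℝ v x₀‖ + M * (max R 0) := by
    intro x hx
    have hdist := part2.dist_le_mul x hx x₀ hx₀
    have hKM : ((K : ℝ≥0) : ℝ) = M := rfl
    rw [dist_eq_norm, dist_eq_norm, hKM] at hdist
    have hdx : dist x x₀ ≤ max R 0 :=
      le_trans (mem_closedBall.mp (hR hx)) (le_max_left _ _)
    rw [dist_eq_norm] at hdx
    have hns := norm_sub_norm_le (fderiv ℝ v x) (fderiv ℝ v x₀)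
    have : M * ‖x - x₀‖ ≤ M * (max R 0) := by
      apply mul_le_mul_of_nonneg_left hdx hM
    linarith
  have hL : (0:ℝ) ≤ ‖fderiv ℝ v x₀‖ + M * (max R 0) := by positivity
  have hlipv : LipschitzOnWith ⟨_, hL⟩ v Ω := by
    apply Convex.lipschitzOnWith_of_nnnorm_fderiv_le
      (fun x hx => hdvΩ.differentiableAt (hopen.mem_nhds hx)) _ hconv
    intro x hx
    exact NNReal.coe_le_coe.mp (by rw [coe_nnnorm]; exact hfdbound x hx)
  obtain ⟨vt, hvtlip, hvteq⟩ := hlipv.extend_real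
  -- quadratic estimate on Ω
  have Q0 : ∀ x ∈ Ω, ∀ y ∈ Ω,
      ‖v y - v x - fderiv ℝ v x (y - x)‖ ≤ M * ‖y - x‖ * ‖y - x‖ := by
    intro x hx y hy
    have hseg : segment ℝ x y ⊆ Ω := hconv.segment_subset hx hy
    refine (convex_segment x y).norm_image_sub_le_of_norm_hasFDerivWithin_le'
      (f' := fun z => fderiv ℝ v z) (φ := fderiv ℝ v x) (C := M * ‖y - x‖)
      (fun z hz => ((hdvΩ.differentiableAt
        (hopen.mem_nhds (hseg hz))).hasFDerivAt).hasFDerivWithinAt)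
      ?_ (left_mem_segment ℝ x y) (right_mem_segment ℝ x y)
    intro z hz
    obtain ⟨a, b, ha, hb, hab, rfl⟩ := hz
    have hzx : a • x + b • y - x = b • (y - x) := by
      have ha' : a = 1 - b := by linarith
      rw [ha']; module
    have hnz : ‖a • x + b • y - x‖ ≤ ‖y - x‖ := by
      rw [hzx, norm_smul, Real.norm_eq_abs, abs_of_nonneg hb]
      nlinarith [norm_nonneg (y - x)]
    have hlip := part2.dist_le_mul _ (hseg ⟨a, b, ha, hb, hab, rfl⟩) _ hx
    have hKM : ((K : ℝ≥0) : ℝ) = M := rfl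
    rw [dist_eq_norm, dist_eq_norm, hKM] at hlip
    calc ‖fderiv ℝ v (a • x + b • y) - fderiv ℝ v x‖ ≤ M * ‖a • x + b • y - x‖ := hlip
      _ ≤ M * ‖y - x‖ := mul_le_mul_of_nonneg_left hnz hM
  -- pass to the closure
  have hvtc : Continuous vt := hvtlip.continuous
  have hg'c : Continuous g' := hg'lip.continuous
  have hFc : Continuous (fun p : EuclideanSpace ℝ (Fin d) × EuclideanSpace ℝ (Fin d) =>
      ‖vt p.2 - vt p.1 - g' p.1 (p.2 - p.1)‖ - M * ‖p.2 - p.1‖ * ‖p.2 - p.1‖) := by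
    have happ : Continuous (fun p : EuclideanSpace ℝ (Fin d) × EuclideanSpace ℝ (Fin d) =>
        g' p.1 (p.2 - p.1)) :=
      (hg'c.comp continuous_fst).clm_apply (continuous_snd.sub continuous_fst)
    exact (((hvtc.comp continuous_snd).sub (hvtc.comp continuous_fst)).sub happ).norm.sub
      ((continuous_const.mul (continuous_snd.sub continuous_fst).norm).mul
        (continuous_snd.sub continuous_fst).norm)
  have Q : ∀ x ∈ closure Ω, ∀ y ∈ closure Ω,
      ‖vt y - vt x - g' x (y - x)‖ ≤ M * ‖y - x‖ * ‖y - x‖ := by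
    intro x hx y hy
    have hmem : (x, y) ∈ closure (Ω ×ˢ Ω) := by
      rw [closure_prod_eq]; exact ⟨hx, hy⟩
    have hne : (𝓝[Ω ×ˢ Ω] (x, y)).NeBot := mem_closure_iff_nhdsWithin_neBot.mp hmem
    have hev : ∀ᶠ p in 𝓝[Ω ×ˢ Ω] (x, y),
        (fun p : EuclideanSpace ℝ (Fin d) × EuclideanSpace ℝ (Fin d) =>
          ‖vt p.2 - vt p.1 - g' p.1 (p.2 - p.1)‖ - M * ‖p.2 - p.1‖ * ‖p.2 - p.1‖) p ≤ 0 := by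
      filter_upwards [self_mem_nhdsWithin] with p hp
      obtain ⟨hp1, hp2⟩ := hp
      have hq := Q0 p.1 hp1 p.2 hp2
      rw [← hvteq hp1, ← hvteq hp2, hEqg hp1]
      linarith
    haveI := hne
    have := le_of_tendsto (hFc.continuousAt.tendsto.mono_left nhdsWithin_le_nhds) hev
    simp only at this
    linarith
  refine ⟨vt, g', Kg, fun x hx => (hvteq hx).symm, hEqg, hvtc.continuousOn,
    hg'lip.lipschitzOnWith, ?_⟩
  intro x hx
  have hlo : (fun y => vt y - vt x - g' x (y - x)) =o[𝓝[closure Ω] x] fun y => y - x := by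
    rw [Asymptotics.isLittleO_iff]
    intro c hc
    have hM1 : (0:ℝ) < M + 1 := by linarith
    have hpos : (0:ℝ) < c / (M + 1) := div_pos hc hM1
    have h1 : ∀ᶠ y in 𝓝 x, ‖y - x‖ < c / (M + 1) := by
      have h0 : Filter.Tendsto (fun y : EuclideanSpace ℝ (Fin d) => y - x) (𝓝 x) (𝓝 (x - x)) :=
        (continuous_id.sub continuous_const).tendsto x
      rw [sub_self] at h0
      have ht : Filter.Tendsto (fun y : EuclideanSpace ℝ (Fin d) => ‖y - x‖) (𝓝 x) (𝓝 0) := by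
        simpa using h0.norm
      exact ht.eventually (gt_mem_nhds hpos)
    filter_upwards [h1.filter_mono nhdsWithin_le_nhds, self_mem_nhdsWithin] with y hy1 hy2
    have hq := Q x hx y hy2
    have hn : (0:ℝ) ≤ ‖y - x‖ := norm_nonneg _
    have h2 : ‖y - x‖ * (M + 1) ≤ c := by
      rw [← le_div_iff₀ hM1]
      exact hy1.le
    calc ‖vt y - vt x - g' x (y - x)‖ ≤ M * ‖y - x‖ * ‖y - x‖ := hq
      _ ≤ c * ‖y - x‖ := by nlinarith
  exact HasFDerivWithinAt.of_isLittleO hlo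
end
end

section
/- Let Ω be a nonempty bounded open convex set in ℝ^d. Then there exist σ > 0 and R > 0 such that for every x ∈ closure(Ω) and every r ∈ (0, R), there exists a point x̂ ∈ Ω with the open ball B_{σr}(x̂) contained in B_r(x) ∩ Ω. -/
open scoped RealInnerProductSpace NNReal Real
open Metric Set MeasureTheory Bornology Filter

noncomputable section

theorem ball_in_intersection {d : ℕ}
    (Ω : Set (EuclideanSpace ℝ (Fin d)))
    (hne : Ω.Nonempty) (hopen : IsOpen Ω) (hconv : Convex ℝ Ω) (hbd : IsBounded Ω) :
    ∃ σ > 0, ∃ R > 0, ∀ x ∈ closure Ω, ∀ r ∈ Ioo (0:ℝ) R,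
      ∃ xhat ∈ Ω, ball xhat (σ * r) ⊆ ball x r ∩ Ω := by
  obtain ⟨x₀, hx₀⟩ := hne
  obtain ⟨ε₀, hε₀pos, hball₀⟩ := Metric.isOpen_iff.mp hopen x₀ hx₀
  obtain ⟨M₀, hM₀⟩ := hbd.subset_closedBall x₀
  set M : ℝ := max M₀ 1 with hMdef
  have hMpos : (0:ℝ) < M := lt_of_lt_of_le one_pos (le_max_right _ _)
  set ε : ℝ := min ε₀ M with hεdef
  have hεpos : 0 < ε := lt_min hε₀pos hMpos
  have hballε : ball x₀ ε ⊆ Ω :=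
    (ball_subset_ball (min_le_left _ _)).trans hball₀
  have hεM : ε ≤ M := min_le_right _ _
  have hclos : closure Ω ⊆ closedBall x₀ M := by
    refine closure_minimal (hM₀.trans (closedBall_subset_closedBall ?_)) isClosed_closedBall
    exact le_max_left _ _
  refine ⟨ε / (4 * M), by positivity, M, hMpos, ?_⟩
  intro x hx r hr
  obtain ⟨hr0, hrM⟩ := hr
  set t : ℝ := r / (2 * M) with htdef
  have ht0 : 0 < t := by positivity
  have ht1 : t ≤ 1 / 2 := by
    rw [htdef, div_le_div_iff₀ (by positivity) (by norm_num)]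
    nlinarith
  have hdxx₀ : dist x x₀ ≤ M := by
    simpa [dist_comm] using hclos hx
  refine ⟨t • x₀ + (1 - t) • x, ?_, ?_⟩
  · have := hconv.combo_interior_closure_mem_interior (a := t) (b := 1 - t)
      (by rwa [hopen.interior_eq]) hx ht0 (by linarith) (by ring)
    rwa [hopen.interior_eq] at this
  · intro z hz
    have hdz : dist z (t • x₀ + (1 - t) • x) < ε / (4 * M) * r := hz
    have hdhat : dist (t • x₀ + (1 - t) • x) x ≤ t * M := by
      have : (t • x₀ + (1 - t) • x) - x = t • (x₀ - x) := by
        module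
      rw [dist_eq_norm, this, norm_smul, Real.norm_eq_abs, abs_of_pos ht0]
      have : ‖x₀ - x‖ ≤ M := by
        rw [← dist_eq_norm, dist_comm]
        exact hdxx₀
      nlinarith
    constructor
    · have h1 : dist z x ≤ dist z (t • x₀ + (1 - t) • x) + dist (t • x₀ + (1 - t) • x) x :=
        dist_triangle _ _ _
      have h2 : ε / (4 * M) * r ≤ r / 4 := by
        rw [div_mul_eq_mul_div, div_le_div_iff₀ (by positivity) (by norm_num)]
        nlinarith
      have h3 : t * M = r / 2 := by
        field_simp [htdef]
        rw [htdef, div_mul_eq_mul_div, div_mul_eq_mul_div, div_eq_iff (by positivity)]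
        ring
      simp only [mem_ball]
      linarith
    · -- z ∈ Ω
      set w : EuclideanSpace ℝ (Fin d) := x₀ + t⁻¹ • (z - (t • x₀ + (1 - t) • x)) with hwdef
      have hwball : w ∈ ball x₀ ε := by
        have : dist w x₀ = t⁻¹ * ‖z - (t • x₀ + (1 - t) • x)‖ := by
          rw [hwdef, dist_eq_norm, add_sub_cancel_left, norm_smul, norm_inv,
            Real.norm_eq_abs, abs_of_pos ht0]
        rw [mem_ball, this]
        have hnorm : ‖z - (t • x₀ + (1 - t) • x)‖ < ε / (4 * M) * r := by
          rwa [← dist_eq_norm]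
        have h4 : t⁻¹ * (ε / (4 * M) * r) = ε / 2 := by
          rw [htdef]
          field_simp
          ring
        calc t⁻¹ * ‖z - (t • x₀ + (1 - t) • x)‖
            < t⁻¹ * (ε / (4 * M) * r) := by
              exact mul_lt_mul_of_pos_left hnorm (inv_pos.mpr ht0)
          _ = ε / 2 := h4
          _ < ε := by linarith
      have hzw : z = t • w + (1 - t) • x := by
        rw [hwdef, smul_add, smul_smul, mul_inv_cancel₀ ht0.ne', one_smul]
        module
      have := hconv.combo_interior_closure_mem_interior (a := t) (b := 1 - t)
        (by rw [hopen.interior_eq]; exact hballε hwball) hx ht0 (by linarith) (by ring)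
      rw [hopen.interior_eq] at this
      rwa [hzw]
end
end

section
/- Let Γ = ⋂_{i=1}^m {x ∈ ℝ^d : x·ν_i < 0} be a polyhedral cone with faces Σ_i = closure(Γ) ∩ {x : x·ν_i = 0}. For 0 ≤ k ≤ m let Γ^{(k)} = ⋃_{S ⊆ {1,…,m}, |S| = k} (⋂_{i∉S} {x : x·ν_i ≤ 0}) ∩ (⋂_{j∈S} {x : x·ν_j = 0}) be the set of points of closure(Γ) lying on at least k faces, and for x ∈ closure(Γ) let ρ(x) = sup{ r > 0 : B_r(x) ∩ closure(Γ) = x + (B_r(0) ∩ closure(Γ_x)) } be the cone radius at x, where Γ_x = ⋂_{i : x·ν_i = 0} {y : y·ν_i < 0} is the tangent cone to Γ at x. Then for each k ∈ {1,…,m} there exists σ > 0 such that ρ(x) ≥ σ · dist(x, Γ^{(k)}) for all x ∈ Γ^{(k−1)} ∖ Γ^{(k)}. -/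
open scoped RealInnerProductSpace NNReal Real
open Metric Set MeasureTheory Bornology Filter Topology

noncomputable section



variable {d : ℕ}

local notation "E" => EuclideanSpace ℝ (Fin d)

/-- sum over subtype of a Finset equals full sum when function vanishes off it -/
lemma sum_subtype_eq' {ι M : Type*} [Fintype ι] [AddCommMonoid M] (s : Finset ι)
    (f : ι → M) (hf : ∀ r ∉ s, f r = 0) : ∑ r : {x // x ∈ s}, f r = ∑ r, f r := by
  rw [Finset.sum_coe_sort s f]
  exact Finset.sum_subset s.subset_univ (fun r _ hr => hf r hr)

/-- conic Carathéodory -/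
lemma conic_cara {ι : Type*} [Fintype ι] [DecidableEq ι] (w : ι → E) :
    ∀ lam : ι → ℝ, (∀ r, 0 ≤ lam r) →
    ∃ mu : ι → ℝ, (∀ r, 0 ≤ mu r) ∧ (∑ r, mu r • w r = ∑ r, lam r • w r) ∧
      LinearIndependent ℝ
        (fun r : {x // x ∈ Finset.univ.filter (fun r => mu r ≠ 0)} => w r) := by
  suffices H : ∀ N : ℕ, ∀ lam : ι → ℝ, (∀ r, 0 ≤ lam r) →
      (Finset.univ.filter (fun r => lam r ≠ 0)).card ≤ N →
      ∃ mu : ι → ℝ, (∀ r, 0 ≤ mu r) ∧ (∑ r, mu r • w r = ∑ r, lam r • w r) ∧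
      LinearIndependent ℝ
        (fun r : {x // x ∈ Finset.univ.filter (fun r => mu r ≠ 0)} => w r) by
    exact fun lam h => H _ lam h le_rfl
  intro N
  induction N with
  | zero =>
    intro lam hlam hcard
    refine ⟨lam, hlam, rfl, ?_⟩
    have hfe : Finset.univ.filter (fun r => lam r ≠ 0) = ∅ :=
      Finset.card_eq_zero.mp (Nat.le_zero.mp hcard)
    have : IsEmpty {x // x ∈ Finset.univ.filter (fun r => lam r ≠ 0)} := by
      rw [hfe]; exact ⟨fun x => (Finset.notMem_empty _ x.2)⟩
    exact linearIndependent_empty_type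
  | succ N ih =>
    intro lam hlam hcard
    set s := Finset.univ.filter (fun r => lam r ≠ 0) with hs
    by_cases hLI : LinearIndependent ℝ (fun r : {x // x ∈ s} => w r)
    · exact ⟨lam, hlam, rfl, hLI⟩
    · obtain ⟨g, hg0, i0, hgi0⟩ := Fintype.not_linearIndependent_iff.mp hLI
      -- WLOG some coordinate positive
      obtain ⟨g, hg0, i0, hgi0⟩ : ∃ g : {x // x ∈ s} → ℝ,
          (∑ i, g i • w i = 0) ∧ ∃ i0, 0 < g i0 := by
        rcases lt_or_gt_of_ne hgi0 with h | h
        · exact ⟨-g, by simpa using hg0, i0, by simpa using h⟩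
        · exact ⟨g, hg0, i0, h⟩
      -- extend g to ι
      set G : ι → ℝ := fun r => if h : r ∈ s then g ⟨r, h⟩ else 0 with hG
      have hGsum : ∑ r, G r • w r = 0 := by
        rw [← sum_subtype_eq' s (fun r => G r • w r)
          (fun r hr => by simp [hG, hr])]
        simpa [hG] using hg0
      -- minimizer
      have hPne : (s.filter (fun r => 0 < G r)).Nonempty := by
        refine ⟨i0.1, Finset.mem_filter.mpr ⟨i0.2, ?_⟩⟩
        simpa [hG, i0.2] using hgi0
      obtain ⟨rs, hrs, hrsmin⟩ :=
        Finset.exists_min_image (s.filter (fun r => 0 < G r)) (fun r => lam r / G r) hPne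
      have hrs_s : rs ∈ s := (Finset.mem_filter.mp hrs).1
      have hGrs : 0 < G rs := (Finset.mem_filter.mp hrs).2
      have hlamrs : 0 < lam rs := by
        rcases (hlam rs).lt_or_eq with h | h
        · exact h
        · exact absurd h.symm (by simpa [hs] using hrs_s)
      set t := lam rs / G rs with ht
      have htpos : 0 < t := div_pos hlamrs hGrs
      set mu : ι → ℝ := fun r => lam r - t * G r with hmu
      have hmu0 : ∀ r, 0 ≤ mu r := by
        intro r
        by_cases hr : 0 < G r
        · by_cases hrs' : r ∈ s
          · have := hrsmin r (Finset.mem_filter.mpr ⟨hrs', hr⟩)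
            rw [div_le_div_iff₀ hGrs hr] at this
            simp only [hmu]
            rw [ht, div_mul_eq_mul_div, sub_nonneg, div_le_iff₀ hGrs]
            nlinarith
          · exact absurd (by simp [hG, hrs']) hr.ne'
        · push_neg at hr
          have : 0 ≤ -(t * G r) := by nlinarith
          simp only [hmu]; nlinarith [hlam r]
      have hmusum : ∑ r, mu r • w r = ∑ r, lam r • w r := by
        simp only [hmu, sub_smul, smul_smul, Finset.sum_sub_distrib]
        rw [show ∑ r, (t * G r) • w r = t • ∑ r, G r • w r by
          rw [Finset.smul_sum]; congr 1; ext r; rw [smul_smul]]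
        rw [hGsum, smul_zero, sub_zero]
      have hmussub : Finset.univ.filter (fun r => mu r ≠ 0) ⊆ s.erase rs := by
        intro r hr
        simp only [Finset.mem_filter, Finset.mem_univ, true_and] at hr
        refine Finset.mem_erase.mpr ⟨?_, ?_⟩
        · rintro rfl
          apply hr
          simp only [hmu, ht]
          field_simp
          ring
        · by_contra hrns
          apply hr
          have : lam r = 0 := by
            by_contra h'
            exact hrns (by simp [hs, h'])
          simp [hmu, this, hG, hrns]
      have hmucard : (Finset.univ.filter (fun r => mu r ≠ 0)).card ≤ N := by
        calc (Finset.univ.filter (fun r => mu r ≠ 0)).card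
            ≤ (s.erase rs).card := Finset.card_le_card hmussub
          _ = s.card - 1 := Finset.card_erase_of_mem hrs_s
          _ ≤ N := by omega
      obtain ⟨mu', h1, h2, h3⟩ := ih mu hmu0 hmucard
      exact ⟨mu', h1, h2.trans hmusum, h3⟩

/-- uniform coefficient bound over independent supports -/
lemma coeff_bound {ι : Type*} [Fintype ι] [DecidableEq ι] (w : ι → E) :
    ∃ C > 0, ∀ s : Finset ι, LinearIndependent ℝ (fun r : {x // x ∈ s} => w r) →
      ∀ mu : ι → ℝ, (∀ r ∉ s, mu r = 0) → ∀ r, |mu r| ≤ C * ‖∑ i, mu i • w i‖ := by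
  have key : ∀ s : Finset ι, ∃ c : ℝ,
      LinearIndependent ℝ (fun r : {x // x ∈ s} => w r) →
      ∀ mu : ι → ℝ, (∀ r ∉ s, mu r = 0) → ∀ r, |mu r| ≤ c * ‖∑ i, mu i • w i‖ := by
    intro s
    by_cases hLI : LinearIndependent ℝ (fun r : {x // x ∈ s} => w r)
    · set F : ({x // x ∈ s} → ℝ) →ₗ[ℝ] E :=
        Fintype.linearCombination ℝ (fun r : {x // x ∈ s} => w r) with hF
      have hker : LinearMap.ker F = ⊥ := by
        rw [LinearMap.ker_eq_bot']
        intro g hg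
        have := Fintype.linearIndependent_iff.mp hLI g
          (by simpa [hF, Fintype.linearCombination_apply] using hg)
        funext r; exact this r
      obtain ⟨K, hKpos, hK⟩ := F.exists_antilipschitzWith hker
      refine ⟨K, fun _ mu hmu r => ?_⟩
      set th : {x // x ∈ s} → ℝ := fun r => mu r with hth
      have hFth : F th = ∑ i, mu i • w i := by
        rw [hF, Fintype.linearCombination_apply]
        exact sum_subtype_eq' s (fun i => mu i • w i)
          (fun i hi => by simp [hmu i hi])
      have hnorm : ‖th‖ ≤ K * ‖F th‖ := by
        have := hK.le_mul_dist th 0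
        simpa [dist_eq_norm, map_zero] using this
      by_cases hr : r ∈ s
      · calc |mu r| = ‖th ⟨r, hr⟩‖ := by simp [hth]
          _ ≤ ‖th‖ := norm_le_pi_norm th ⟨r, hr⟩
          _ ≤ K * ‖F th‖ := hnorm
          _ = K * ‖∑ i, mu i • w i‖ := by rw [hFth]
      · rw [hmu r hr]
        simp only [abs_zero]
        positivity
    · exact ⟨0, fun h => absurd h hLI⟩
  choose c hc using key
  obtain ⟨C0, hC0⟩ := Finite.exists_le c
  refine ⟨max C0 0 + 1, by positivity, fun s hLI mu hmu r => ?_⟩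
  calc |mu r| ≤ c s * ‖∑ i, mu i • w i‖ := hc s hLI mu hmu r
    _ ≤ (max C0 0 + 1) * ‖∑ i, mu i • w i‖ := by
        apply mul_le_mul_of_nonneg_right _ (norm_nonneg _)
        calc c s ≤ C0 := hC0 s
          _ ≤ max C0 0 + 1 := by linarith [le_max_left C0 (0:ℝ)]

/-- projection onto a nonempty closed convex set, variational form -/
lemma proj_var {K : Set (EuclideanSpace ℝ (Fin d))} (hcl : IsClosed K) (hco : Convex ℝ K)
    (hne : K.Nonempty) (x : EuclideanSpace ℝ (Fin d)) :
    ∃ p ∈ K, ‖x - p‖ = infDist x K ∧ ∀ y ∈ K, ⟪x - p, y - p⟫ ≤ 0 := by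
  obtain ⟨p, hpK, hnorm⟩ :=
    exists_norm_eq_iInf_of_complete_convex hne hcl.isComplete hco x
  refine ⟨p, hpK, ?_, (norm_eq_iInf_iff_real_inner_le_zero hco hpK).mp hnorm⟩
  rw [infDist_eq_iInf]
  simp only [dist_eq_norm]
  exact hnorm

/-- Hoffman-type error bound for polyhedral cones -/
lemma hoffman {ι : Type*} [Fintype ι] [DecidableEq ι] (w : ι → E) :
    ∃ C > 0, ∀ x : E, infDist x {y : E | ∀ r, ⟪y, w r⟫ ≤ 0} ≤
      C * ∑ r, max ⟪x, w r⟫ 0 := by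
  obtain ⟨C, hCpos, hC⟩ := coeff_bound w
  refine ⟨C, hCpos, fun x => ?_⟩
  set P : Set E := {y : E | ∀ r, ⟪y, w r⟫ ≤ 0} with hPdef
  have hSnn : 0 ≤ ∑ r, max ⟪x, w r⟫ 0 :=
    Finset.sum_nonneg fun r _ => le_max_right _ _
  have hPcl : IsClosed P := by
    have : P = ⋂ r, {y : E | ⟪y, w r⟫ ≤ 0} := by ext y; simp [hPdef, Set.mem_iInter]
    rw [this]
    exact isClosed_iInter fun r =>
      isClosed_le (Continuous.inner continuous_id continuous_const) continuous_const
  have hPco : Convex ℝ P := by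
    intro y hy z hz a b ha hb hab
    intro r
    have : ⟪a • y + b • z, w r⟫ = a * ⟪y, w r⟫ + b * ⟪z, w r⟫ := by
      rw [inner_add_left, real_inner_smul_left, real_inner_smul_left]
    rw [this]
    nlinarith [hy r, hz r]
  have hP0 : (0 : E) ∈ P := fun r => by simp
  obtain ⟨p, hpP, hpdist, hpvar⟩ := proj_var hPcl hPco ⟨0, hP0⟩ x
  set q := x - p with hq
  -- basic consequences
  have hqp : ⟪q, p⟫ = 0 := by
    have h1 : ⟪q, (0 : E) - p⟫ ≤ 0 := hpvar 0 hP0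
    have h2p : (2 : ℝ) • p ∈ P := fun r => by
      rw [real_inner_smul_left]; nlinarith [hpP r]
    have h2 : ⟪q, (2 : ℝ) • p - p⟫ ≤ 0 := hpvar _ h2p
    have e1 : ⟪q, (0 : E) - p⟫ = -⟪q, p⟫ := by rw [zero_sub, inner_neg_right]
    have e2 : ((2 : ℝ) • p - p) = p := by module
    rw [e1] at h1; rw [e2] at h2
    linarith
  have hqy : ∀ y ∈ P, ⟪q, y⟫ ≤ 0 := by
    intro y hy
    have hpy : p + y ∈ P := fun r => by
      rw [inner_add_left]; exact add_nonpos (hpP r) (hy r)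
    have := hpvar _ hpy
    rwa [add_sub_cancel_left] at this
  -- the finitely generated cone
  set W : Set E := {u : E | ∃ lam : ι → ℝ, (∀ r, 0 ≤ lam r) ∧ u = ∑ r, lam r • w r}
    with hWdef
  have hWco : Convex ℝ W := by
    rintro u ⟨lu, hlu, rfl⟩ v ⟨lv, hlv, rfl⟩ a b ha hb hab
    refine ⟨fun r => a * lu r + b * lv r, fun r => add_nonneg (mul_nonneg ha (hlu r)) (mul_nonneg hb (hlv r)), ?_⟩
    rw [Finset.smul_sum, Finset.smul_sum, ← Finset.sum_add_distrib]
    congr 1; ext r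
    rw [add_smul, smul_smul, smul_smul]
  have hW0 : (0 : E) ∈ W := ⟨fun _ => 0, fun _ => le_rfl, by simp⟩
  have hWw : ∀ r, w r ∈ W := by
    intro r
    refine ⟨fun i => if i = r then (1:ℝ) else 0, fun i => by dsimp only; split <;> norm_num, ?_⟩
    rw [show ∑ i, (if i = r then (1:ℝ) else 0) • w i = ∑ i, (if i = r then w i else 0) by
      congr 1; ext i; split <;> simp]
    simp
  have hWadd : ∀ u ∈ W, ∀ v ∈ W, u + v ∈ W := by
    rintro u ⟨lu, hlu, rfl⟩ v ⟨lv, hlv, rfl⟩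
    exact ⟨fun r => lu r + lv r, fun r => add_nonneg (hlu r) (hlv r),
      by rw [← Finset.sum_add_distrib]; congr 1; ext r; rw [add_smul]⟩
  -- q belongs to the closure of W
  have hqW : q ∈ closure W := by
    by_contra hqnW
    obtain ⟨p', hp'W, _, hp'var⟩ :=
      proj_var isClosed_closure (hWco.closure) ⟨0, subset_closure hW0⟩ q
    set v := q - p' with hv
    have hvne : v ≠ 0 := by
      intro h
      exact hqnW (by rw [show q = p' by simpa [hv, sub_eq_zero] using h]; exact hp'W)
    have hvp' : ⟪v, p'⟫ = 0 := by
      have h1 : ⟪v, (0 : E) - p'⟫ ≤ 0 := hp'var 0 (subset_closure hW0)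
      have h2p : (2 : ℝ) • p' ∈ closure W := by
        have hmaps : Set.MapsTo (fun u : E => (2 : ℝ) • u) W W := by
          rintro u ⟨lu, hlu, rfl⟩
          exact ⟨fun r => 2 * lu r, fun r => mul_nonneg (by norm_num) (hlu r),
            by show (2:ℝ) • _ = _
               rw [Finset.smul_sum]; congr 1; ext r; rw [smul_smul]⟩
        exact hmaps.closure (continuous_const_smul _) hp'W
      have h2 : ⟪v, (2 : ℝ) • p' - p'⟫ ≤ 0 := hp'var _ h2p
      have e1 : ⟪v, (0 : E) - p'⟫ = -⟪v, p'⟫ := by rw [zero_sub, inner_neg_right]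
      have e2 : ((2 : ℝ) • p' - p') = p' := by module
      rw [e1] at h1; rw [e2] at h2
      linarith
    have hvP : v ∈ P := by
      intro r
      have hmem : p' + w r ∈ closure W := by
        have hmaps : Set.MapsTo (fun u : E => u + w r) W W := by
          intro u hu; exact hWadd u hu _ (hWw r)
        exact hmaps.closure (continuous_id.add continuous_const) hp'W
      have := hp'var _ hmem
      rwa [add_sub_cancel_left] at this
    have hcontr : ⟪q, v⟫ ≤ 0 := hqy v hvP
    have : ⟪q, v⟫ = ‖v‖ ^ 2 := by
      have hqvp : q = v + p' := by rw [hv]; module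
      have hp'v : ⟪p', v⟫ = 0 := by rw [real_inner_comm]; exact hvp'
      rw [hqvp, inner_add_left, hp'v, add_zero, real_inner_self_eq_norm_sq]
    nlinarith [norm_pos_iff.mpr hvne, sq_nonneg ‖v‖, norm_pos_iff.mpr hvne]
  -- the estimate on W, extended to the closure
  have hest : ∀ u ∈ closure W, ⟪x, u⟫ ≤ C * ‖u‖ * ∑ r, max ⟪x, w r⟫ 0 := by
    have hclosed : IsClosed {u : E | ⟪x, u⟫ ≤ C * ‖u‖ * ∑ r, max ⟪x, w r⟫ 0} :=
      isClosed_le (Continuous.inner continuous_const continuous_id)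
        (((continuous_const.mul continuous_norm).mul continuous_const))
    refine closure_minimal ?_ hclosed
    rintro u ⟨lam, hlam, rfl⟩
    show ⟪x, ∑ r, lam r • w r⟫ ≤ C * ‖∑ r, lam r • w r‖ * ∑ r, max ⟪x, w r⟫ 0
    obtain ⟨mu, hmu0, hmusum, hmuLI⟩ := conic_cara w lam hlam
    rw [← hmusum]
    have hmub : ∀ r, |mu r| ≤ C * ‖∑ i, mu i • w i‖ :=
      hC _ hmuLI mu (fun r hr => by
        by_contra h
        exact hr (by simp [h])) 
    rw [inner_sum]
    calc ∑ r, ⟪x, mu r • w r⟫ = ∑ r, mu r * ⟪x, w r⟫ := by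
          congr 1; ext r; rw [real_inner_smul_right]
      _ ≤ ∑ r, (C * ‖∑ i, mu i • w i‖) * max ⟪x, w r⟫ 0 := by
          apply Finset.sum_le_sum
          intro r _
          calc mu r * ⟪x, w r⟫ ≤ mu r * max ⟪x, w r⟫ 0 :=
                mul_le_mul_of_nonneg_left (le_max_left _ _) (hmu0 r)
            _ ≤ (C * ‖∑ i, mu i • w i‖) * max ⟪x, w r⟫ 0 := by
                apply mul_le_mul_of_nonneg_right _ (le_max_right _ _)
                exact le_trans (le_abs_self _) (hmub r)
      _ = C * ‖∑ i, mu i • w i‖ * ∑ r, max ⟪x, w r⟫ 0 := by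
          rw [← Finset.mul_sum]
  have hq2 : ‖q‖ ^ 2 = ⟪x, q⟫ := by
    have hxpq : x = p + q := by rw [hq]; module
    have hpq : ⟪p, q⟫ = 0 := by rw [real_inner_comm]; exact hqp
    rw [hxpq, inner_add_left, hpq, zero_add, real_inner_self_eq_norm_sq]
  have hqle : ‖q‖ ≤ C * ∑ r, max ⟪x, w r⟫ 0 := by
    by_cases hq0 : q = 0
    · rw [hq0, norm_zero]; positivity
    · have h1 := hest q hqW
      rw [← hq2] at h1
      have hqpos : 0 < ‖q‖ := norm_pos_iff.mpr hq0
      calc ‖q‖ = ‖q‖ ^ 2 / ‖q‖ := by field_simp [hqpos.ne']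
        _ ≤ (C * ‖q‖ * ∑ r, max ⟪x, w r⟫ 0) / ‖q‖ := by
            gcongr
        _ = C * ∑ r, max ⟪x, w r⟫ 0 := by field_simp
  calc infDist x P ≤ dist x p := infDist_le_dist_of_mem hpP
    _ = ‖x - p‖ := by rw [dist_eq_norm]
    _ ≤ C * ∑ r, max ⟪x, w r⟫ 0 := hqle

lemma closure_polyCone {m : ℕ} (ν : Fin m → E) (I : Set (Fin m))
    (hne : (⋂ i ∈ I, {y : E | ⟪y, ν i⟫ < 0}).Nonempty) :
    closure (⋂ i ∈ I, {y : E | ⟪y, ν i⟫ < 0}) = {y : E | ∀ i ∈ I, ⟪y, ν i⟫ ≤ 0} := by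
  obtain ⟨v, hv⟩ := hne
  have hv' : ∀ i ∈ I, ⟪v, ν i⟫ < 0 := by
    intro i hi
    have := Set.mem_iInter₂.mp hv i hi
    exact this
  apply Set.Subset.antisymm
  · apply closure_minimal
    · intro y hy i hi
      exact (Set.mem_iInter₂.mp hy i hi).le
    · have : {y : E | ∀ i ∈ I, ⟪y, ν i⟫ ≤ 0} = ⋂ i ∈ I, {y : E | ⟪y, ν i⟫ ≤ 0} := by
        ext y; simp [Set.mem_iInter₂]
      rw [this]
      exact isClosed_biInter fun i _ =>
        isClosed_le (Continuous.inner continuous_id continuous_const) continuous_const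
  · intro y hy
    have hcont : Tendsto (fun t : ℝ => y + t • (v - y)) (𝓝[>] 0) (𝓝 y) := by
      have h2 : Tendsto (fun t : ℝ => y + t • (v - y)) (𝓝 0) (𝓝 (y + (0:ℝ) • (v - y))) :=
        (continuous_const.add ((continuous_id).smul continuous_const)).tendsto (0:ℝ)
      simp only [zero_smul, add_zero] at h2
      exact h2.mono_left nhdsWithin_le_nhds
    apply mem_closure_of_tendsto hcont
    filter_upwards [Ioo_mem_nhdsGT_of_mem (Set.left_mem_Ico.mpr zero_lt_one)] with t ht
    refine Set.mem_iInter₂.mpr fun i hi => ?_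
    show ⟪y + t • (v - y), ν i⟫ < 0
    rw [inner_add_left, real_inner_smul_left, inner_sub_left]
    nlinarith [hy i hi, hv' i hi, ht.1, ht.2]

set_option maxHeartbeats 1000000 in
theorem cone_radius_lower_bound {d m : ℕ}
    (ν : Fin m → EuclideanSpace ℝ (Fin d))
    (hν : ∀ i, ‖ν i‖ = 1)
    (Γ : Set (EuclideanSpace ℝ (Fin d)))
    (hΓ : Γ = ⋂ i, {x | ⟪x, ν i⟫ < 0})
    (hmin : ∀ j, Γ ⊂ ⋂ i ∈ ({j}ᶜ : Set (Fin m)), {x | ⟪x, ν i⟫ < 0})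
    (Γk : ℕ → Set (EuclideanSpace ℝ (Fin d)))
    (hΓk : ∀ n, Γk n = {x | ∃ S : Finset (Fin m), S.card = n ∧
      (∀ i ∉ S, ⟪x, ν i⟫ ≤ 0) ∧ ∀ j ∈ S, ⟪x, ν j⟫ = 0})
    (ρ : EuclideanSpace ℝ (Fin d) → ℝ)
    (hρ : ∀ x, ρ x = sSup {r : ℝ | 0 < r ∧
      ball x r ∩ closure Γ =
        (fun y => x + y) '' (ball 0 r ∩
          closure (⋂ i ∈ {i : Fin m | ⟪x, ν i⟫ = 0}, {y | ⟪y, ν i⟫ < 0}))})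
    (k : ℕ) (hk1 : 1 ≤ k) (hkm : k ≤ m) :
    ∃ σ > 0, ∀ x ∈ Γk (k - 1) \ Γk k, σ * infDist x (Γk k) ≤ ρ x := by
  classical
  set wB : Finset (Fin m) → (Fin m ⊕ Fin m) → EuclideanSpace ℝ (Fin d) :=
    fun B => Sum.elim ν (fun i => if i ∈ B then -ν i else 0) with hwB
  have hhoff : ∀ B : Finset (Fin m), ∃ C > 0, ∀ x : EuclideanSpace ℝ (Fin d),
      infDist x {y | ∀ r, ⟪y, wB B r⟫ ≤ 0} ≤ C * ∑ r, max ⟪x, wB B r⟫ 0 :=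
    fun B => hoffman (wB B)
  choose Cf hCfpos hCf using hhoff
  obtain ⟨C, hCb⟩ := Finite.exists_le Cf
  have hCpos : (0:ℝ) < C := lt_of_lt_of_le (hCfpos ∅) (hCb ∅)
  refine ⟨C⁻¹, by positivity, ?_⟩
  rintro x ⟨hx1, hx2⟩
  rw [hΓk] at hx1
  obtain ⟨S₀, hS₀card, hS₀le, hS₀eq⟩ := hx1
  have hle : ∀ i, ⟪x, ν i⟫ ≤ 0 := fun i => by
    by_cases h : i ∈ S₀
    · exact (hS₀eq i h).le
    · exact hS₀le i h
  set Az : Finset (Fin m) := Finset.univ.filter (fun i => ⟪x, ν i⟫ = 0) with hAzdef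
  have hmemAz : ∀ i, i ∈ Az ↔ ⟪x, ν i⟫ = 0 := fun i => by simp [hAzdef]
  have hS₀Az : S₀ ⊆ Az := fun i hi => (hmemAz i).mpr (hS₀eq i hi)
  have hAzcard_le : Az.card ≤ k - 1 := by
    by_contra hcon
    push_neg at hcon
    have hk_le : k ≤ Az.card := by omega
    obtain ⟨S, hSsub, hScard⟩ := Finset.exists_subset_card_eq hk_le
    apply hx2
    rw [hΓk]
    exact ⟨S, hScard, fun i _ => hle i, fun i hi => (hmemAz i).mp (hSsub hi)⟩
  have hAzcard : Az.card = k - 1 := by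
    have h1 : k - 1 ≤ Az.card := hS₀card ▸ Finset.card_le_card hS₀Az
    omega
  have hAzne_univ : Az ≠ Finset.univ := by
    intro h
    have : Az.card = m := by rw [h, Finset.card_univ, Fintype.card_fin]
    omega
  have hTne : (Finset.univ \ Az).Nonempty := by
    rw [Finset.sdiff_nonempty]
    intro h
    exact hAzne_univ (Finset.univ_subset_iff.mp h)
  obtain ⟨j, hjmem, hjmin⟩ :=
    Finset.exists_min_image (Finset.univ \ Az) (fun i => -⟪x, ν i⟫) hTne
  have hjAz : j ∉ Az := (Finset.mem_sdiff.mp hjmem).2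
  set δ : ℝ := -⟪x, ν j⟫ with hδdef
  have hδpos : 0 < δ := by
    have h1 : ⟪x, ν j⟫ ≤ 0 := hle j
    have h2 : ⟪x, ν j⟫ ≠ 0 := fun h => hjAz ((hmemAz j).mpr h)
    have := lt_of_le_of_ne h1 h2
    simp only [hδdef]
    linarith
  have hδmin : ∀ i, i ∉ Az → δ ≤ -⟪x, ν i⟫ := fun i hi =>
    hjmin i (Finset.mem_sdiff.mpr ⟨Finset.mem_univ i, hi⟩)
  -- point z from minimality at j
  obtain ⟨z, hzbig, hznΓ⟩ := Set.exists_of_ssubset (hmin j)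
  have hzlt : ∀ i, i ≠ j → ⟪z, ν i⟫ < 0 := by
    intro i hij
    exact Set.mem_iInter₂.mp hzbig i (by simp [hij])
  have hzj : 0 ≤ ⟪z, ν j⟫ := by
    by_contra h
    push_neg at h
    apply hznΓ
    rw [hΓ]
    refine Set.mem_iInter.mpr fun i => ?_
    by_cases hij : i = j
    · subst hij; exact h
    · exact hzlt i hij
  -- epsilon and the auxiliary vector w0
  set F : Finset ℝ := insert (1:ℝ) (Az.image (fun i => -⟪z, ν i⟫)) with hFdef
  have hFne : F.Nonempty := ⟨1, by simp [hFdef]⟩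
  set ε : ℝ := F.min' hFne / 2 with hεdef
  have hεpos : 0 < ε := by
    apply div_pos _ two_pos
    rw [Finset.lt_min'_iff]
    intro y hy
    simp only [hFdef, Finset.mem_insert, Finset.mem_image] at hy
    rcases hy with rfl | ⟨i, hi, rfl⟩
    · norm_num
    · have hij : i ≠ j := fun h => hjAz (h ▸ hi)
      have := hzlt i hij
      linarith
  have hεle : ∀ i ∈ Az, ε ≤ -⟪z, ν i⟫ / 2 := by
    intro i hi
    have hm := F.min'_le (-⟪z, ν i⟫) (by
      simp only [hFdef, Finset.mem_insert, Finset.mem_image]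
      exact Or.inr ⟨i, hi, rfl⟩)
    rw [hεdef]
    linarith
  set w0 : EuclideanSpace ℝ (Fin d) := z + ε • ν j with hw0def
  have hwA : ∀ i, ⟪x, ν i⟫ = 0 → ⟪w0, ν i⟫ < 0 := by
    intro i hi
    have hiAz : i ∈ Az := (hmemAz i).mpr hi
    have hij : i ≠ j := fun h => hjAz (h ▸ hiAz)
    have hCS : ⟪ν j, ν i⟫ ≤ 1 := by
      have h := real_inner_le_norm (ν j) (ν i)
      rw [hν j, hν i] at h
      simpa using h
    have h1 : ε ≤ -⟪z, ν i⟫ / 2 := hεle i hiAz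
    show ⟪z + ε • ν j, ν i⟫ < 0
    rw [inner_add_left, real_inner_smul_left]
    nlinarith [hzlt i hij, hεpos]
  have hwj : ε ≤ ⟪w0, ν j⟫ := by
    show ε ≤ ⟪z + ε • ν j, ν j⟫
    rw [inner_add_left, real_inner_smul_left, real_inner_self_eq_norm_sq, hν j]
    nlinarith [hzj]
  have hwjpos : 0 < ⟪w0, ν j⟫ := lt_of_lt_of_le hεpos hwj
  -- closures
  have hwGA : w0 ∈ ⋂ i ∈ {i : Fin m | ⟪x, ν i⟫ = 0},
      {y : EuclideanSpace ℝ (Fin d) | ⟪y, ν i⟫ < 0} :=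
    Set.mem_iInter₂.mpr fun i hi => hwA i hi
  have hclGA : closure (⋂ i ∈ {i : Fin m | ⟪x, ν i⟫ = 0},
      {y : EuclideanSpace ℝ (Fin d) | ⟪y, ν i⟫ < 0}) =
      {y : EuclideanSpace ℝ (Fin d) | ∀ i ∈ {i : Fin m | ⟪x, ν i⟫ = 0}, ⟪y, ν i⟫ ≤ 0} :=
    closure_polyCone ν _ ⟨w0, hwGA⟩
  -- Γ is nonempty
  have hΓne : Γ.Nonempty := by
    set ε' : ℝ := δ / (2 * (‖w0‖ + 1)) with hε'def
    have hε'pos : 0 < ε' := by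
      rw [hε'def]
      positivity
    refine ⟨x + ε' • w0, ?_⟩
    rw [hΓ]
    refine Set.mem_iInter.mpr fun i => ?_
    show ⟪x + ε' • w0, ν i⟫ < 0
    rw [inner_add_left, real_inner_smul_left]
    by_cases hi : ⟪x, ν i⟫ = 0
    · rw [hi, zero_add]
      exact mul_neg_of_pos_of_neg hε'pos (hwA i hi)
    · have h1 : δ ≤ -⟪x, ν i⟫ := hδmin i (fun h => hi ((hmemAz i).mp h))
      have h2 : ⟪w0, ν i⟫ ≤ ‖w0‖ := by
        have h := real_inner_le_norm w0 (ν i)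
        rw [hν i] at h
        simpa using h
      have h3 : ε' * ⟪w0, ν i⟫ ≤ ε' * ‖w0‖ := by nlinarith
      have h4 : ε' * ‖w0‖ < δ := by
        rw [hε'def, div_mul_eq_mul_div, div_lt_iff₀ (by positivity)]
        nlinarith [norm_nonneg w0, hδpos]
      linarith
  have hclΓ : closure Γ = {y : EuclideanSpace ℝ (Fin d) | ∀ i, ⟪y, ν i⟫ ≤ 0} := by
    have hΓ' : Γ = ⋂ i ∈ (Set.univ : Set (Fin m)),
        {y : EuclideanSpace ℝ (Fin d) | ⟪y, ν i⟫ < 0} := by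
      rw [hΓ]; simp
    rw [hΓ', closure_polyCone ν Set.univ (hΓ' ▸ hΓne)]
    ext y; simp
  -- the cone property at radius δ
  have hkey : ball x δ ∩ closure Γ =
      (fun y => x + y) '' (ball 0 δ ∩ closure (⋂ i ∈ {i : Fin m | ⟪x, ν i⟫ = 0},
        {y : EuclideanSpace ℝ (Fin d) | ⟪y, ν i⟫ < 0})) := by
    ext y
    constructor
    · rintro ⟨hyb, hyc⟩
      refine ⟨y - x, ⟨?_, ?_⟩, by simp⟩
      · rw [mem_ball, dist_zero_right]
        rw [mem_ball, dist_eq_norm] at hyb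
        exact hyb
      · rw [hclGA]
        intro i hi
        rw [hclΓ] at hyc
        rw [inner_sub_left, (by exact hi : ⟪x, ν i⟫ = 0), sub_zero]
        exact hyc i
    · rintro ⟨u, ⟨hub, huc⟩, rfl⟩
      rw [hclGA] at huc
      rw [mem_ball, dist_zero_right] at hub
      constructor
      · rw [mem_ball, dist_eq_norm, add_sub_cancel_left]
        exact hub
      · rw [hclΓ]
        intro i
        rw [inner_add_left]
        by_cases hi : ⟪x, ν i⟫ = 0
        · rw [hi, zero_add]
          exact huc i hi
        · have h1 : δ ≤ -⟪x, ν i⟫ := hδmin i (fun h => hi ((hmemAz i).mp h))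
          have h2 : ⟪u, ν i⟫ ≤ ‖u‖ := by
            have h := real_inner_le_norm u (ν i)
            rw [hν i] at h
            simpa using h
          linarith
  -- ρ x ≥ δ
  have hρx : δ ≤ ρ x := by
    rw [hρ]
    apply le_csSup
    · set c : ℝ := (δ + 1) / ⟪w0, ν j⟫ with hcdef
      have hcpos : 0 < c := div_pos (by linarith) hwjpos
      refine ⟨‖c • w0‖, ?_⟩
      rintro r ⟨hrpos, hreq⟩
      by_contra hcon
      push_neg at hcon
      have hmemGA : c • w0 ∈ closure (⋂ i ∈ {i : Fin m | ⟪x, ν i⟫ = 0},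
          {y : EuclideanSpace ℝ (Fin d) | ⟪y, ν i⟫ < 0}) := by
        apply subset_closure
        refine Set.mem_iInter₂.mpr fun i hi => ?_
        show ⟪c • w0, ν i⟫ < 0
        rw [real_inner_smul_left]
        exact mul_neg_of_pos_of_neg hcpos (hwA i hi)
      have hmem : x + c • w0 ∈ ball x r ∩ closure Γ := by
        rw [hreq]
        exact ⟨c • w0, ⟨by rw [mem_ball, dist_zero_right]; exact hcon, hmemGA⟩, rfl⟩
      have h2 := hmem.2
      rw [hclΓ] at h2
      have h3 := h2 j
      rw [inner_add_left, real_inner_smul_left] at h3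
      have h4 : c * ⟪w0, ν j⟫ = δ + 1 := by
        rw [hcdef, div_mul_cancel₀ _ hwjpos.ne']
      have h5 : ⟪x, ν j⟫ = -δ := by rw [hδdef]; ring
      rw [h4, h5] at h3
      linarith
    · exact ⟨hδpos, hkey⟩
  -- Hoffman application
  set B : Finset (Fin m) := insert j Az with hBdef
  have hBcard : B.card = k := by
    rw [hBdef, Finset.card_insert_of_notMem hjAz, hAzcard]
    omega
  have hPB0 : (0 : EuclideanSpace ℝ (Fin d)) ∈ {y | ∀ r, ⟪y, wB B r⟫ ≤ 0} :=
    fun r => by simp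
  have hPBsub : {y : EuclideanSpace ℝ (Fin d) | ∀ r, ⟪y, wB B r⟫ ≤ 0} ⊆ Γk k := by
    intro y hy
    rw [hΓk]
    refine ⟨B, hBcard, fun i _ => hy (Sum.inl i), fun i hi => ?_⟩
    have h1 : ⟪y, ν i⟫ ≤ 0 := hy (Sum.inl i)
    have h2 := hy (Sum.inr i)
    simp only [hwB, Sum.elim_inr, if_pos hi, inner_neg_right] at h2
    linarith
  have hsum : ∑ r : Fin m ⊕ Fin m, max ⟪x, wB B r⟫ 0 = δ := by
    rw [Fintype.sum_sum_type]
    have h1 : ∀ i : Fin m, max ⟪x, (wB B) (Sum.inl i)⟫ 0 = 0 := fun i =>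
      max_eq_right (hle i)
    have h2 : ∀ i : Fin m, max ⟪x, (wB B) (Sum.inr i)⟫ 0 = if i = j then δ else 0 := by
      intro i
      by_cases hij : i = j
      · subst hij
        have hiB : i ∈ B := Finset.mem_insert_self i Az
        simp only [hwB, Sum.elim_inr, if_pos hiB, inner_neg_right, if_pos rfl]
        exact max_eq_left hδpos.le
      · by_cases hiB : i ∈ B
        · have hiAz : i ∈ Az := by
            rcases Finset.mem_insert.mp hiB with h | h
            · exact absurd h hij
            · exact h
          have hx0 : ⟪x, ν i⟫ = 0 := (hmemAz i).mp hiAz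
          simp only [hwB, Sum.elim_inr, if_pos hiB, inner_neg_right, hx0, if_neg hij]
          simp
        · simp only [hwB, Sum.elim_inr, if_neg hiB, inner_zero_right, if_neg hij]
          simp
    rw [Finset.sum_congr rfl (fun i _ => h1 i), Finset.sum_congr rfl (fun i _ => h2 i)]
    simp
  have happ := hCf B x
  rw [hsum] at happ
  have hinf : infDist x (Γk k) ≤ C * δ :=
    calc infDist x (Γk k) ≤ infDist x {y | ∀ r, ⟪y, wB B r⟫ ≤ 0} :=
          infDist_le_infDist_of_subset hPBsub ⟨0, hPB0⟩
      _ ≤ Cf B * δ := happ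
      _ ≤ C * δ := mul_le_mul_of_nonneg_right (hCb B) hδpos.le
  calc C⁻¹ * infDist x (Γk k) ≤ C⁻¹ * (C * δ) :=
        mul_le_mul_of_nonneg_left hinf (by positivity)
    _ = δ := by field_simp
    _ ≤ ρ x := hρx
end
end
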